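/- For smooth functions F, G, h on an open interval I ⊆ ℝ and any n ∈ ℕ, one has Op_n[F·G]h = ∑_{s=0}^{n} (F^{(n-s)}/(n-s)!) · (Op_s[G]h), as functions on I. -/

import Mathlib

section AuxLemmas
open Finset

lemma leibniz_aux (I : Set ℝ) (hU : UniqueDiffOn ℝ I) (F G : ℝ → ℝ)
    (hF : ContDiffOn ℝ (⊤ : ℕ∞) F I) (hG : ContDiffOn ℝ (⊤ : ℕ∞) G I) (n : ℕ) :
    ∀ a ∈ I, iteratedDerivWithin n (fun t => F t * G t) I a =
      ∑ j ∈ Finset.range (n + 1), (n.choose j : ℝ) *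
        (iteratedDerivWithin j F I a * iteratedDerivWithin (n - j) G I a) := by
  have hdF : ∀ (j : ℕ) (a : ℝ), a ∈ I →
      DifferentiableWithinAt ℝ (iteratedDerivWithin j F I) I a := by
    intro j a ha
    exact (hF.differentiableOn_iteratedDerivWithin
      (by exact_mod_cast WithTop.coe_lt_top j) hU) a ha
  have hdG : ∀ (j : ℕ) (a : ℝ), a ∈ I →
      DifferentiableWithinAt ℝ (iteratedDerivWithin j G I) I a := by
    intro j a ha
    exact (hG.differentiableOn_iteratedDerivWithin
      (by exact_mod_cast WithTop.coe_lt_top j) hU) a ha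
  induction n with
  | zero => intro a ha; simp
  | succ n IH =>
    intro a ha
    rw [iteratedDerivWithin_succ]
    rw [derivWithin_congr (fun y hy => IH y hy) (IH a ha)]
    rw [derivWithin_fun_sum (A := fun j y => (n.choose j : ℝ) *
      (iteratedDerivWithin j F I y * iteratedDerivWithin (n - j) G I y)) (fun j _ =>
      (((hdF j a ha).mul (hdG (n - j) a ha)).const_mul _))]
    have step : ∀ j ∈ range (n + 1),
        derivWithin (fun y => (n.choose j : ℝ) *
          (iteratedDerivWithin j F I y * iteratedDerivWithin (n - j) G I y)) I a
        = (n.choose j : ℝ) * (iteratedDerivWithin (j + 1) F I a *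
            iteratedDerivWithin (n - j) G I a
            + iteratedDerivWithin j F I a * iteratedDerivWithin (n - j + 1) G I a) := by
      intro j _
      rw [derivWithin_const_mul (d := fun y => iteratedDerivWithin j F I y *
          iteratedDerivWithin (n - j) G I y) _ ((hdF j a ha).mul (hdG (n - j) a ha)),
          derivWithin_fun_mul (hdF j a ha) (hdG (n - j) a ha),
          ← iteratedDerivWithin_succ, ← iteratedDerivWithin_succ]
    rw [Finset.sum_congr rfl step]
    simp_rw [mul_add]
    rw [Finset.sum_add_distrib]
    rw [Finset.sum_range_succ' (fun j => (((n + 1).choose j : ℝ)) *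
      (iteratedDerivWithin j F I a * iteratedDerivWithin (n + 1 - j) G I a)) (n + 1)]
    have e1 : ∀ i, n + 1 - (i + 1) = n - i := fun i => by omega
    simp only [e1, Nat.choose_zero_right, Nat.cast_one, one_mul, Nat.sub_zero]
    have h2 : ∑ j ∈ range (n + 1), (n.choose j : ℝ) *
        (iteratedDerivWithin j F I a * iteratedDerivWithin (n - j + 1) G I a)
        = ∑ i ∈ range (n + 1), (n.choose (i + 1) : ℝ) *
            (iteratedDerivWithin (i + 1) F I a * iteratedDerivWithin (n - i) G I a)
          + iteratedDerivWithin 0 F I a * iteratedDerivWithin (n + 1) G I a := by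
      rw [Finset.sum_range_succ' (fun j => (n.choose j : ℝ) *
        (iteratedDerivWithin j F I a * iteratedDerivWithin (n - j + 1) G I a)) n]
      rw [Finset.sum_range_succ (fun i => (n.choose (i + 1) : ℝ) *
        (iteratedDerivWithin (i + 1) F I a * iteratedDerivWithin (n - i) G I a)) n]
      simp only [Nat.choose_succ_self, Nat.cast_zero, zero_mul, add_zero,
        Nat.choose_zero_right, Nat.cast_one, one_mul, Nat.sub_zero]
      congr 1
      apply Finset.sum_congr rfl
      intro i hi
      have : n - (i + 1) + 1 = n - i := by
        have := Finset.mem_range.mp hi; omega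
      rw [this]
    rw [h2]
    simp_rw [Nat.choose_succ_succ', Nat.cast_add, add_mul, Finset.sum_add_distrib]
    ring

lemma tri_swap (n : ℕ) (f : ℕ → ℕ → ℝ) :
    ∑ s ∈ range (n + 1), ∑ k ∈ range (s + 1), f s k
      = ∑ k ∈ range (n + 1), ∑ j ∈ range (n - k + 1), f (n - j) k := by
  rw [Finset.sum_comm' (t' := range (n + 1)) (s' := fun k => Finset.Icc k n)
    (fun s k => by simp only [mem_range, Finset.mem_Icc]; omega)]
  apply Finset.sum_congr rfl
  intro k hk
  have := Finset.sum_Ico_reflect (fun s => f s k) 0 (show n - k + 1 ≤ n + 1 by omega)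
  simp only [Nat.Ico_zero_eq_range] at this
  rw [this]
  have hk' : k ≤ n := by simpa using Nat.lt_succ_iff.mp (mem_range.mp hk)
  have : n + 1 - (n - k + 1) = k := by omega
  rw [this, Nat.sub_zero, Finset.Ico_add_one_right_eq_Icc]

end AuxLemmas


open Polynomial

/-- The Pochhammer symbol `(1/2)_s`. -/
noncomputable def poch (s : ℕ) : ℝ := (ascPochhammer ℝ s).eval (1/2 : ℝ)

/-- The operator `Op_n[F]` acting on `h`, with derivatives taken within the set `I`:
`(Op_n[F]h)(a) = ∑_{s=0}^{n} F^{(n-s)}(a)/(n-s)! · h^{(s)}(a)/(1/2)_s`. -/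
noncomputable def OpW (I : Set ℝ) (n : ℕ) (F h : ℝ → ℝ) (a : ℝ) : ℝ :=
  ∑ s ∈ Finset.range (n + 1),
    iteratedDerivWithin (n - s) F I a / (Nat.factorial (n - s) : ℝ) *
      (iteratedDerivWithin s h I a / poch s)

/-- For smooth functions `F, G, h` on an open interval `I ⊆ ℝ` and any `n ∈ ℕ`,
`Op_n[F·G]h = ∑_{s=0}^{n} (F^{(n-s)}/(n-s)!) · (Op_s[G]h)` on `I`. -/
theorem stmt1 (I : Set ℝ) (hIopen : IsOpen I) (hIconn : I.OrdConnected)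
    (F G h : ℝ → ℝ) (hF : ContDiffOn ℝ (⊤ : ℕ∞) F I) (hG : ContDiffOn ℝ (⊤ : ℕ∞) G I)
    (hh : ContDiffOn ℝ (⊤ : ℕ∞) h I) (n : ℕ) :
    ∀ a ∈ I,
      OpW I n (fun t => F t * G t) h a =
        ∑ s ∈ Finset.range (n + 1),
          iteratedDerivWithin (n - s) F I a / (Nat.factorial (n - s) : ℝ) * OpW I s G h a := by
  intro a ha
  have hU : UniqueDiffOn ℝ I := hIopen.uniqueDiffOn
  -- RHS as double sum, then swap
  have hR : ∑ s ∈ Finset.range (n + 1),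
      iteratedDerivWithin (n - s) F I a / (Nat.factorial (n - s) : ℝ) * OpW I s G h a
      = ∑ k ∈ Finset.range (n + 1), ∑ j ∈ Finset.range (n - k + 1),
          iteratedDerivWithin (n - (n - j)) F I a / (Nat.factorial (n - (n - j)) : ℝ) *
            (iteratedDerivWithin (n - j - k) G I a / (Nat.factorial (n - j - k) : ℝ) *
              (iteratedDerivWithin k h I a / poch k)) := by
    simp_rw [OpW, Finset.mul_sum]
    exact tri_swap n (fun s k =>
      iteratedDerivWithin (n - s) F I a / (Nat.factorial (n - s) : ℝ) *
        (iteratedDerivWithin (s - k) G I a / (Nat.factorial (s - k) : ℝ) *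
          (iteratedDerivWithin k h I a / poch k)))
  rw [hR]
  -- LHS as double sum
  unfold OpW
  apply Finset.sum_congr rfl
  intro k hk
  have hk' : k ≤ n := Nat.lt_succ_iff.mp (Finset.mem_range.mp hk)
  rw [leibniz_aux I hU F G hF hG (n - k) a ha]
  rw [Finset.sum_div, Finset.sum_mul]
  apply Finset.sum_congr rfl
  intro j hj
  have hj' : j ≤ n - k := Nat.lt_succ_iff.mp (Finset.mem_range.mp hj)
  have e1 : n - (n - j) = j := by omega
  have e2 : n - j - k = n - k - j := by omega
  rw [e1, e2]
  have c1 : ((n - k).choose j : ℝ) ≠ 0 := by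
    exact_mod_cast (Nat.choose_pos hj').ne'
  have key : ((n - k).factorial : ℝ)
      = ((n - k).choose j : ℝ) * (j.factorial : ℝ) * ((n - k - j).factorial : ℝ) := by
    exact_mod_cast (Nat.choose_mul_factorial_mul_factorial hj').symm
  rw [key, mul_assoc, mul_div_mul_left _ _ c1]
  have c2 : (j.factorial : ℝ) ≠ 0 := by exact_mod_cast j.factorial_ne_zero
  have c3 : ((n - k - j).factorial : ℝ) ≠ 0 := by exact_mod_cast (n - k - j).factorial_ne_zero
  field_simp
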